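/- Suppose G is connected, 2-connected (for every vertex v ∈ V the induced multigraph on V∖{v} is connected), and has no cut-edges (e(R, V∖R) ≥ 2 for every nonempty proper subset R ⊆ V). Suppose v ∈ V is a vertex whose class satisfies [{v}] = x + y in Λ(G) for some classes x, y with B(x,y) = −1. Then there exist disjoint subsets R, S ⊆ V∖{v} with R ∪ S = V∖{v} such that, in Λ(G), {x, y} = {[R ∪ {v}], [S ∪ {v}]}, and e(R,S) = 1. Furthermore, there are unique vertices u1, u2 ∈ V∖{v} with B(x, [{u1}]) = 1 and B(y, [{u2}]) = 1, and every vertex w ∉ {v, u1, u2} satisfies B(x, [{w}]) ≤ 0 and B(y, [{w}]) ≤ 0. -/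

import Mathlib

open Finset

/-- The subgroup of constant functions in `V → ℤ`. -/
def constSub (V : Type) [Fintype V] : AddSubgroup (V → ℤ) where
  carrier := {f | ∃ c : ℤ, ∀ v, f v = c}
  zero_mem' := ⟨0, fun _ => rfl⟩
  add_mem' := by
    rintro f g ⟨c, hc⟩ ⟨d, hd⟩
    exact ⟨c + d, fun v => by simp [hc v, hd v]⟩
  neg_mem' := by
    rintro f ⟨c, hc⟩
    exact ⟨-c, fun v => by simp [hc v]⟩

/-- The graph lattice `Λ(G)`: functions `V → ℤ` modulo constants. -/
abbrev GrLat (V : Type) [Fintype V] := (V → ℤ) ⧸ constSub V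

/-- The pairing `B(b,c) = (1/2) ∑_{u,v ∈ V} (b v - b u)(c v - c u) e(u,v)`. -/
def Bq {V : Type} [Fintype V] (e : V → V → ℕ) (b c : V → ℤ) : ℚ :=
  (1 / 2 : ℚ) * ∑ u : V, ∑ v : V,
    ((b v - b u : ℤ) : ℚ) * ((c v - c u : ℤ) : ℚ) * (e u v : ℚ)

lemma Bq_well {V : Type} [Fintype V] (e : V → V → ℕ)
    (a₁ b₁ a₂ b₂ : V → ℤ)
    (h₁ : @Setoid.r _ (QuotientAddGroup.leftRel (constSub V)) a₁ a₂)
    (h₂ : @Setoid.r _ (QuotientAddGroup.leftRel (constSub V)) b₁ b₂) :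
    Bq e a₁ b₁ = Bq e a₂ b₂ := by
  rw [QuotientAddGroup.leftRel_apply] at h₁ h₂
  obtain ⟨c, hc⟩ := h₁
  obtain ⟨d, hd⟩ := h₂
  unfold Bq
  congr 1
  refine Finset.sum_congr rfl fun u _ => Finset.sum_congr rfl fun v _ => ?_
  have h1 : a₂ v - a₂ u = a₁ v - a₁ u := by
    have hu := hc u; have hv := hc v
    simp only [Pi.add_apply, Pi.neg_apply] at hu hv
    omega
  have h2 : b₂ v - b₂ u = b₁ v - b₁ u := by
    have hu := hd u; have hv := hd v
    simp only [Pi.add_apply, Pi.neg_apply] at hu hv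
    omega
  rw [h1, h2]

/-- The pairing `B` descended to the graph lattice. -/
def BL {V : Type} [Fintype V] (e : V → V → ℕ) (x y : GrLat V) : ℚ :=
  Quotient.liftOn₂ x y (Bq e) (Bq_well e)

/-- Indicator function of a subset `R ⊆ V`. -/
def ind {V : Type} [Fintype V] [DecidableEq V] (R : Finset V) : V → ℤ :=
  fun v => if v ∈ R then 1 else 0

/-- The class of the indicator function `[R]` in the graph lattice. -/
def cls {V : Type} [Fintype V] [DecidableEq V] (R : Finset V) : GrLat V :=
  QuotientAddGroup.mk (ind R)

/-- A class `x ∈ Λ(G)` is irreducible if it cannot be written `x = y + z`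
with `y, z` nonzero and `B(y,z) ≥ 0`. -/
def IrredGL {V : Type} [Fintype V] (e : V → V → ℕ) (x : GrLat V) : Prop :=
  ¬ ∃ y z : GrLat V, y ≠ 0 ∧ z ≠ 0 ∧ x = y + z ∧ 0 ≤ BL e y z

/-- The induced multigraph on a subset `W ⊆ V` is connected. -/
def IndConn {V : Type} [Fintype V] (e : V → V → ℕ) (W : Finset V) : Prop :=
  (SimpleGraph.fromRel fun u v : {x // x ∈ W} => 0 < e u.1 v.1).Connected

/-- `e(R,S)`: the number of edges between disjoint vertex sets `R` and `S`. -/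
def eSet {V : Type} [Fintype V] (e : V → V → ℕ) (R S : Finset V) : ℕ :=
  ∑ u ∈ R, ∑ v ∈ S, e u v

set_option linter.unusedSectionVars false

section Helpers
variable {V : Type} [Fintype V] [DecidableEq V] (e : V → V → ℕ)

lemma Bq_symm (b c : V → ℤ) : Bq e b c = Bq e c b := by
  unfold Bq
  congr 1
  refine Finset.sum_congr rfl fun u _ => Finset.sum_congr rfl fun v _ => ?_
  ring

lemma Bq_congr_diff (b c d : V → ℤ) (h : ∀ u w, c w - c u = d w - d u) :
    Bq e b c = Bq e b d := by
  unfold Bq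
  congr 1
  refine Finset.sum_congr rfl fun u _ => Finset.sum_congr rfl fun v _ => ?_
  rw [h u v]

lemma Bq_add_right (b c d : V → ℤ) :
    Bq e b (c + d) = Bq e b c + Bq e b d := by
  unfold Bq
  rw [← mul_add, ← Finset.sum_add_distrib]
  congr 1
  refine Finset.sum_congr rfl fun u _ => ?_
  rw [← Finset.sum_add_distrib]
  refine Finset.sum_congr rfl fun v _ => ?_
  simp only [Pi.add_apply]
  push_cast
  ring

lemma Bq_zero_right (b : V → ℤ) : Bq e b 0 = 0 := by
  unfold Bq
  simp

lemma Bq_sub_right (b c d : V → ℤ) :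
    Bq e b (c - d) = Bq e b c - Bq e b d := by
  have := Bq_add_right e b (c - d) d
  simp only [sub_add_cancel] at this
  linarith

lemma Bq_sum_right (b : V → ℤ) {ι : Type*} (s : Finset ι) (g : ι → V → ℤ) :
    Bq e b (∑ t ∈ s, g t) = ∑ t ∈ s, Bq e b (g t) := by
  classical
  induction s using Finset.induction_on with
  | empty => simpa using Bq_zero_right e b
  | insert _ _ h ih =>
    rw [Finset.sum_insert h, Bq_add_right, ih, Finset.sum_insert h]

lemma Bq_single (hsymm : ∀ u v, e u v = e v u) (v : V) (c : V → ℤ) :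
    Bq e (ind {v}) c = ∑ u : V, ((c v - c u : ℤ) : ℚ) * (e v u : ℚ) := by
  unfold Bq ind
  have key : ∀ u w : V,
      (((if w ∈ ({v} : Finset V) then (1:ℤ) else 0) - (if u ∈ ({v} : Finset V) then 1 else 0) : ℤ) : ℚ)
        * ((c w - c u : ℤ) : ℚ) * (e u w : ℚ)
      = (if u = v then ((c v - c w : ℤ) : ℚ) * (e v w : ℚ) else 0)
        + (if w = v then ((c v - c u : ℤ) : ℚ) * (e v u : ℚ) else 0) := by
    intro u w
    by_cases hu : u = v <;> by_cases hw : w = v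
    · simp [hu, hw]
    · rw [hu]; simp [hw]
    · rw [hw]; simp [hu, hsymm u v]
    · simp [hu, hw]
  have : ∀ u : V, ∑ w : V,
      ((((if w ∈ ({v} : Finset V) then (1:ℤ) else 0) - (if u ∈ ({v} : Finset V) then 1 else 0) : ℤ) : ℚ)
        * ((c w - c u : ℤ) : ℚ) * (e u w : ℚ))
      = ∑ w : V, ((if u = v then ((c v - c w : ℤ) : ℚ) * (e v w : ℚ) else 0)
        + (if w = v then ((c v - c u : ℤ) : ℚ) * (e v u : ℚ) else 0)) :=
    fun u => Finset.sum_congr rfl fun w _ => key u w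
  rw [Finset.sum_congr rfl fun u _ => this u]
  simp only [Finset.sum_add_distrib]
  have e1 : ∀ u : V, (∑ w : V, if u = v then ((c v - c w : ℤ) : ℚ) * (e v w : ℚ) else 0)
      = (if u = v then ∑ w : V, ((c v - c w : ℤ) : ℚ) * (e v w : ℚ) else 0) := by
    intro u; by_cases hu : u = v <;> simp [hu]
  rw [Finset.sum_congr rfl fun u _ => e1 u]
  simp only [Finset.sum_ite_eq', Finset.mem_univ, if_true]
  ring

lemma ind_eq_sum (A : Finset V) : ind A = ∑ u ∈ A, ind ({u} : Finset V) := by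
  funext w
  simp only [ind, Finset.sum_apply]
  rw [Finset.sum_congr rfl (fun u _ => rfl)]
  by_cases hw : w ∈ A
  · rw [Finset.sum_eq_single w]
    · simp [hw]
    · intro u hu hne; simp [ind, hne.symm]
    · intro h; exact absurd hw h
  · rw [Finset.sum_eq_zero, if_neg hw]
    intro u hu
    have : w ≠ u := fun h => hw (h ▸ hu)
    simp [ind, this]

lemma Bq_ind (hsymm : ∀ u v, e u v = e v u) (A : Finset V) (c : V → ℤ) :
    Bq e (ind A) c = ∑ u ∈ A, ∑ w : V, ((c u - c w : ℤ) : ℚ) * (e u w : ℚ) := by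
  rw [Bq_symm, ind_eq_sum, Bq_sum_right]
  exact Finset.sum_congr rfl fun u _ => by rw [Bq_symm, Bq_single e hsymm]

lemma Bq_ind_split (hsymm : ∀ u v, e u v = e v u) (A : Finset V) (c : V → ℤ) :
    Bq e (ind A) c = ∑ u ∈ A, ∑ w ∈ Aᶜ, ((c u - c w : ℤ) : ℚ) * (e u w : ℚ) := by
  rw [Bq_ind e hsymm]
  have split : ∀ u : V, (∑ w : V, ((c u - c w : ℤ) : ℚ) * (e u w : ℚ))
      = (∑ w ∈ A, ((c u - c w : ℤ) : ℚ) * (e u w : ℚ))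
        + ∑ w ∈ Aᶜ, ((c u - c w : ℤ) : ℚ) * (e u w : ℚ) := by
    intro u; rw [Finset.sum_add_sum_compl]
  rw [Finset.sum_congr rfl fun u _ => split u, Finset.sum_add_distrib]
  have anti : (∑ u ∈ A, ∑ w ∈ A, ((c u - c w : ℤ) : ℚ) * (e u w : ℚ)) = 0 := by
    have h1 : (∑ u ∈ A, ∑ w ∈ A, ((c u - c w : ℤ) : ℚ) * (e u w : ℚ))
        = ∑ w ∈ A, ∑ u ∈ A, ((c u - c w : ℤ) : ℚ) * (e u w : ℚ) := Finset.sum_comm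
    have h2 : (∑ w ∈ A, ∑ u ∈ A, ((c u - c w : ℤ) : ℚ) * (e u w : ℚ))
        = ∑ u ∈ A, ∑ w ∈ A, (-(((c u - c w : ℤ) : ℚ) * (e u w : ℚ))) := by
      refine Finset.sum_congr rfl fun u _ => Finset.sum_congr rfl fun w _ => ?_
      rw [hsymm u w]; push_cast; ring
    rw [h2] at h1
    simp only [Finset.sum_neg_distrib] at h1
    linarith
  rw [anti, zero_add]

lemma eSet_cast (A B : Finset V) :
    ((eSet e A B : ℕ) : ℚ) = ∑ u ∈ A, ∑ w ∈ B, (e u w : ℚ) := by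
  unfold eSet; push_cast; rfl

lemma Bq_ind_self (hsymm : ∀ u v, e u v = e v u) (A : Finset V) :
    Bq e (ind A) (ind A) = (eSet e A Aᶜ : ℚ) := by
  rw [Bq_ind_split e hsymm, eSet_cast]
  refine Finset.sum_congr rfl fun u hu => Finset.sum_congr rfl fun w hw => ?_
  rw [Finset.mem_compl] at hw
  simp [ind, hu, hw]

lemma core {V : Type} [Fintype V] [Nonempty V] [DecidableEq V]
    (e : V → V → ℕ) (hsymm : ∀ u v, e u v = e v u)
    (hnocut : ∀ R : Finset V, R ≠ ∅ → R ≠ Finset.univ → 2 ≤ eSet e R Rᶜ)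
    (v : V) (f : V → ℤ) (hfv : f v = 0)
    (hB : Bq e f f - Bq e (ind {v}) f = 1) : ∀ u, f u ≤ 0 := by
  by_contra hcon
  push_neg at hcon
  obtain ⟨u₀, hu₀⟩ := Finset.exists_max_image Finset.univ f ⟨Classical.arbitrary V, Finset.mem_univ _⟩
  obtain ⟨u₁, hu₁⟩ := Finset.exists_min_image Finset.univ f ⟨Classical.arbitrary V, Finset.mem_univ _⟩
  set m := f u₁ with hm
  set M := f u₀ with hM
  have hmle : ∀ u, m ≤ f u := fun u => hu₁.2 u (Finset.mem_univ u)
  have hMge : ∀ u, f u ≤ M := fun u => hu₀.2 u (Finset.mem_univ u)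
  have hm0 : m ≤ 0 := hfv ▸ hmle v
  have hM1 : 1 ≤ M := by obtain ⟨w, hw⟩ := hcon; exact le_trans hw (hMge w)
  set A : ℤ → Finset V := fun t => Finset.univ.filter (fun u => t ≤ f u) with hA
  -- decomposition of differences of f over levels
  have hdec : ∀ u : V, f u - m = ∑ t ∈ Finset.Ioc m M, ind (A t) u := by
    intro u
    have : ∀ t, ind (A t) u = if t ≤ f u then (1:ℤ) else 0 := by
      intro t; simp [ind, hA]
    rw [Finset.sum_congr rfl fun t _ => this t]
    rw [Finset.sum_boole]
    have hfil : (Finset.Ioc m M).filter (fun t => t ≤ f u) = Finset.Ioc m (f u) := by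
      ext t
      simp only [Finset.mem_filter, Finset.mem_Ioc]
      constructor
      · rintro ⟨⟨h1, h2⟩, h3⟩; exact ⟨h1, h3⟩
      · rintro ⟨h1, h2⟩; exact ⟨⟨h1, le_trans h2 (hMge u)⟩, h2⟩
    rw [hfil, Int.card_Ioc, Int.toNat_sub_of_le (hmle u)]
  -- decompose Bq with f in the second slot
  have hdecB : ∀ b : V → ℤ, Bq e b f = ∑ t ∈ Finset.Ioc m M, Bq e b (ind (A t)) := by
    intro b
    have h1 : Bq e b f = Bq e b (∑ t ∈ Finset.Ioc m M, ind (A t)) := by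
      apply Bq_congr_diff
      intro u w
      have h2 := hdec u
      have h3 := hdec w
      have : (∑ t ∈ Finset.Ioc m M, ind (A t)) u = ∑ t ∈ Finset.Ioc m M, ind (A t) u := by
        simp [Finset.sum_apply]
      have h4 : (∑ t ∈ Finset.Ioc m M, ind (A t)) w = ∑ t ∈ Finset.Ioc m M, ind (A t) w := by
        simp [Finset.sum_apply]
      omega
    rw [h1, Bq_sum_right]
  -- key equation
  have hkey : ∑ t ∈ Finset.Ioc m M, (Bq e f (ind (A t)) - Bq e (ind {v}) (ind (A t))) = 1 := by
    rw [Finset.sum_sub_distrib]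
    have e1 : ∑ t ∈ Finset.Ioc m M, Bq e f (ind (A t)) = Bq e f f := (hdecB f).symm
    have e2 : ∑ t ∈ Finset.Ioc m M, Bq e (ind {v}) (ind (A t)) = Bq e (ind {v}) f :=
      (hdecB (ind {v})).symm
    rw [e1, e2, hB]
  -- lower bound on Bq e f (ind (A t))
  have hlow : ∀ t ∈ Finset.Ioc m M, (eSet e (A t) (A t)ᶜ : ℚ) ≤ Bq e f (ind (A t)) := by
    intro t ht
    rw [Bq_symm, Bq_ind_split e hsymm, eSet_cast]
    refine Finset.sum_le_sum fun u hu => Finset.sum_le_sum fun w hw => ?_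
    rw [hA] at hu hw
    simp only [Finset.mem_filter, Finset.mem_univ, true_and] at hu
    rw [Finset.mem_compl, Finset.mem_filter] at hw
    simp only [Finset.mem_univ, true_and, not_le] at hw
    have h1 : (1 : ℤ) ≤ f u - f w := by omega
    have : (1 : ℚ) ≤ ((f u - f w : ℤ) : ℚ) := by exact_mod_cast h1
    nlinarith [show (0:ℚ) ≤ (e u w : ℚ) by positivity]
  -- value of Bq with single indicator against level indicator
  have hsing : ∀ t : ℤ, Bq e (ind {v}) (ind (A t)) =
      ∑ u : V, ((ind (A t) v - ind (A t) u : ℤ) : ℚ) * (e v u : ℚ) :=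
    fun t => Bq_single e hsymm v (ind (A t))
  -- each term is nonnegative; terms with 0 < t are at least 2
  have hterm : ∀ t ∈ Finset.Ioc m M, (0 ≤ Bq e f (ind (A t)) - Bq e (ind {v}) (ind (A t)))
      ∧ (0 < t → 2 ≤ Bq e f (ind (A t)) - Bq e (ind {v}) (ind (A t))) := by
    intro t ht
    by_cases htv : t ≤ 0
    · -- v ∈ A t
      refine ⟨?_, fun h => absurd h (by omega)⟩
      have hvA : v ∈ A t := by simp [hA, hfv, htv]
      have hle : Bq e (ind {v}) (ind (A t)) ≤ (eSet e (A t) (A t)ᶜ : ℚ) := by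
        rw [hsing t, eSet_cast]
        have hvsum : ∑ u : V, ((ind (A t) v - ind (A t) u : ℤ) : ℚ) * (e v u : ℚ)
            = ∑ w ∈ (A t)ᶜ, (e v w : ℚ) := by
          rw [← Finset.sum_add_sum_compl (A t)]
          have z1 : ∑ u ∈ A t, ((ind (A t) v - ind (A t) u : ℤ) : ℚ) * (e v u : ℚ) = 0 :=
            Finset.sum_eq_zero fun u hu => by simp [ind, hvA, hu]
          have z2 : ∑ u ∈ (A t)ᶜ, ((ind (A t) v - ind (A t) u : ℤ) : ℚ) * (e v u : ℚ)
              = ∑ w ∈ (A t)ᶜ, (e v w : ℚ) := by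
            refine Finset.sum_congr rfl fun u hu => ?_
            rw [Finset.mem_compl] at hu
            simp [ind, hvA, hu]
          rw [z1, z2, zero_add]
        rw [hvsum]
        exact Finset.single_le_sum (f := fun u => ∑ w ∈ (A t)ᶜ, (e u w : ℚ))
          (fun u _ => Finset.sum_nonneg fun w _ => by positivity) hvA
      linarith [hlow t ht]
    · -- v ∉ A t, so the term is at least 2
      push_neg at htv
      have hvA : v ∉ A t := by simp [hA, hfv]; omega
      have hne : A t ≠ ∅ := by
        intro h
        have : u₀ ∈ A t := by
          simp only [hA, Finset.mem_filter, Finset.mem_univ, true_and]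
          exact (Finset.mem_Ioc.mp ht).2
        rw [h] at this; exact absurd this (Finset.notMem_empty u₀)
      have hnu : A t ≠ Finset.univ := by
        intro h; exact hvA (h ▸ Finset.mem_univ v)
      have h2 : (2 : ℚ) ≤ (eSet e (A t) (A t)ᶜ : ℚ) := by
        exact_mod_cast hnocut (A t) hne hnu
      have hneg : Bq e (ind {v}) (ind (A t)) ≤ 0 := by
        rw [hsing t]
        refine Finset.sum_nonpos fun u _ => ?_
        have h0 : (ind (A t) v : ℤ) = 0 := by simp [ind, hvA]
        have h1 : (0:ℤ) ≤ ind (A t) u := by unfold ind; split <;> norm_num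
        have hc : ((ind (A t) v - ind (A t) u : ℤ) : ℚ) ≤ 0 := by
          exact_mod_cast show (ind (A t) v - ind (A t) u : ℤ) ≤ 0 by omega
        exact mul_nonpos_of_nonpos_of_nonneg hc (by positivity)
      exact ⟨by linarith [hlow t ht], fun _ => by linarith [hlow t ht]⟩
  -- the term at t = M is at least 2; contradiction
  have hMmem : M ∈ Finset.Ioc m M := Finset.mem_Ioc.mpr ⟨by omega, le_refl M⟩
  have h2M : 2 ≤ Bq e f (ind (A M)) - Bq e (ind {v}) (ind (A M)) :=
    (hterm M hMmem).2 (by omega)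
  have hge : Bq e f (ind (A M)) - Bq e (ind {v}) (ind (A M))
      ≤ ∑ t ∈ Finset.Ioc m M, (Bq e f (ind (A t)) - Bq e (ind {v}) (ind (A t))) :=
    Finset.single_le_sum (fun t ht => (hterm t ht).1) hMmem
  rw [hkey] at hge
  linarith

lemma mk_eq_of_diff_const {V : Type} [Fintype V] (a b : V → ℤ) (c : ℤ)
    (h : ∀ u, b u - a u = c) :
    (QuotientAddGroup.mk a : GrLat V) = QuotientAddGroup.mk b := by
  rw [QuotientAddGroup.eq]
  exact ⟨c, fun u => by have := h u; show -a u + b u = c; omega⟩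

lemma nat_sum_eq_one {V : Type} [DecidableEq V] {s : Finset V} {W : V → ℕ}
    (h : ∑ u ∈ s, W u = 1) :
    ∃ u₁ ∈ s, W u₁ = 1 ∧ ∀ u ∈ s, u ≠ u₁ → W u = 0 := by
  have hex : ∃ u ∈ s, W u ≠ 0 := by
    by_contra hc
    push_neg at hc
    rw [Finset.sum_eq_zero hc] at h
    exact absurd h zero_ne_one
  obtain ⟨u₁, hu₁s, hW⟩ := hex
  have hsplit : W u₁ + ∑ u ∈ s.erase u₁, W u = 1 := by
    rw [Finset.add_sum_erase _ _ hu₁s]; exact h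
  have hW1 : W u₁ = 1 := by omega
  have hrest : ∑ u ∈ s.erase u₁, W u = 0 := by omega
  refine ⟨u₁, hu₁s, hW1, fun u hus hne => ?_⟩
  exact (Finset.sum_eq_zero_iff).mp hrest u (Finset.mem_erase.mpr ⟨hne, hus⟩)

end Helpers


/-- Suppose `G` is connected, 2-connected and has no cut-edges, and a vertex
class `[{v}]` satisfies `[{v}] = x + y` in `Λ(G)` with `B(x,y) = −1`.  Then
`V ∖ {v}` splits into disjoint `R, S` with `{x,y} = {[R ∪ {v}], [S ∪ {v}]}`
and `e(R,S) = 1`; moreover there are unique vertices `u₁, u₂ ≠ v` with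
`B(x,[u₁]) = 1` and `B(y,[u₂]) = 1`, and every `w ∉ {v,u₁,u₂}` has
`B(x,[w]) ≤ 0` and `B(y,[w]) ≤ 0`. -/
theorem stmt6 {V : Type} [Fintype V] [Nonempty V] [DecidableEq V]
    (e : V → V → ℕ) (hsymm : ∀ u v, e u v = e v u) (hloop : ∀ v, e v v = 0)
    (hconn : (SimpleGraph.fromRel fun u v => 0 < e u v).Connected)
    (h2conn : ∀ v : V, IndConn e ({v} : Finset V)ᶜ)
    (hnocut : ∀ R : Finset V, R ≠ ∅ → R ≠ Finset.univ → 2 ≤ eSet e R Rᶜ)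
    (v : V) (x y : GrLat V) (hxy : cls {v} = x + y) (hB : BL e x y = -1) :
    ∃ R S : Finset V, Disjoint R S ∧ v ∉ R ∧ v ∉ S ∧
      R ∪ S = ({v} : Finset V)ᶜ ∧
      ((x = cls (insert v R) ∧ y = cls (insert v S)) ∨
        (x = cls (insert v S) ∧ y = cls (insert v R))) ∧
      eSet e R S = 1 ∧
      ∃ u₁ u₂ : V, u₁ ≠ v ∧ u₂ ≠ v ∧
        BL e x (cls {u₁}) = 1 ∧ BL e y (cls {u₂}) = 1 ∧
        (∀ u, u ≠ v → BL e x (cls {u}) = 1 → u = u₁) ∧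
        (∀ u, u ≠ v → BL e y (cls {u}) = 1 → u = u₂) ∧
        (∀ w, w ≠ v → w ≠ u₁ → w ≠ u₂ →
          BL e x (cls {w}) ≤ 0 ∧ BL e y (cls {w}) ≤ 0) := by
  classical
  obtain ⟨f₀, hf₀⟩ := QuotientAddGroup.mk_surjective x
  set f : V → ℤ := fun u => f₀ u - f₀ v with hf
  have hfv : f v = 0 := by simp [hf]
  have hx : QuotientAddGroup.mk f = x := by
    rw [← hf₀]
    exact mk_eq_of_diff_const f f₀ (f₀ v) (fun u => by simp [hf])
  set g : V → ℤ := ind {v} - f with hg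
  have hy : QuotientAddGroup.mk g = y := by
    have h1 : y = cls {v} - x := by rw [hxy]; abel
    rw [h1, ← hx]
    rfl
  have hBfg : Bq e f g = -1 := by rw [← hx, ← hy] at hB; exact hB
  have heq1 : Bq e f f - Bq e (ind {v}) f = 1 := by
    have h1 : Bq e f g = Bq e f (ind {v}) - Bq e f f := by rw [hg, Bq_sub_right]
    have h2 : Bq e f (ind {v}) = Bq e (ind {v}) f := Bq_symm e f (ind {v})
    linarith
  have hfle : ∀ u, f u ≤ 0 := core e hsymm hnocut v f hfv heq1
  -- second application of the core lemma, to y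
  set g' : V → ℤ := fun u => g u - 1 with hg'
  have hg'v : g' v = 0 := by simp [hg', hg, ind, hfv]
  have heq2 : Bq e g' g' - Bq e (ind {v}) g' = 1 := by
    have c1 : Bq e g' g = Bq e g g := by
      rw [Bq_symm e g' g, Bq_symm e g g]
      exact Bq_congr_diff e g g' g (fun u w => by simp [hg'])
    have c1' : Bq e g' g' = Bq e g' g :=
      Bq_congr_diff e g' g' g (fun u w => by simp [hg'])
    have c2 : Bq e (ind {v}) g' = Bq e (ind {v}) g :=
      Bq_congr_diff e (ind {v}) g' g (fun u w => by simp [hg'])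
    have hfg : f = ind {v} - g := by rw [hg]; abel
    have c3 : Bq e g g - Bq e (ind {v}) g = 1 := by
      have h1 : Bq e f g = Bq e g f := Bq_symm e f g
      have h2 : Bq e g f = Bq e g (ind {v}) - Bq e g g := by
        rw [hfg, Bq_sub_right]
      have h3 : Bq e g (ind {v}) = Bq e (ind {v}) g := Bq_symm e g (ind {v})
      linarith
    linarith
  have hgle : ∀ u, g' u ≤ 0 := core e hsymm hnocut v g' hg'v heq2
  have hfrange : ∀ u, f u = 0 ∨ f u = -1 := by
    intro u
    have h1 := hfle u
    have h2 := hgle u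
    by_cases hu : u = v
    · left; rw [hu]; exact hfv
    · have h3 : ind {v} u = 0 := by simp [ind, hu]
      have h4 : g' u = -(f u) - 1 := by simp [hg', hg, h3]
      omega
  set A : Finset V := Finset.univ.filter (fun u => f u = 0) with hAdef
  have hvA : v ∈ A := by simp [hAdef, hfv]
  set R : Finset V := A.erase v with hRdef
  set S : Finset V := Aᶜ with hSdef
  have hvR : v ∉ R := Finset.notMem_erase v A
  have hvS : v ∉ S := by simp [hSdef, hvA]
  have hins : insert v R = A := Finset.insert_erase hvA
  have hmemS : ∀ u, u ∈ S ↔ f u = -1 := by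
    intro u
    simp only [hSdef, Finset.mem_compl, hAdef, Finset.mem_filter, Finset.mem_univ, true_and]
    rcases hfrange u with h | h <;> simp [h]
  have hmemR : ∀ u, u ∈ R ↔ (u ≠ v ∧ f u = 0) := by
    intro u
    simp [hRdef, hAdef, Finset.mem_erase]
  -- g is the indicator of insert v S
  have hgind : ∀ u, g u = ind (insert v S) u := by
    intro u
    by_cases hu : u = v
    · rw [hu]; simp [hg, ind, hfv, hvS]
    · have h3 : ind {v} u = 0 := by simp [ind, hu]
      rcases hfrange u with h | h
      · have : u ∉ insert v S := by
          simp only [Finset.mem_insert, hmemS u]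
          push_neg
          exact ⟨hu, by omega⟩
        simp [hg, ind, h3, h, this, hu]
      · have : u ∈ insert v S := Finset.mem_insert_of_mem ((hmemS u).mpr h)
        simp [hg, ind, h3, h, this, hu]
  have hxA : x = cls (insert v R) := by
    rw [hins, ← hx]
    exact mk_eq_of_diff_const f (ind A) 1 (fun u => by
      rcases hfrange u with h | h
      · have : u ∈ A := by simp [hAdef, h]
        simp [ind, this, h]
      · have : u ∉ A := by simp [hAdef, h]
        simp [ind, this, h])
  have hyS : y = cls (insert v S) := by
    rw [← hy]
    exact mk_eq_of_diff_const g (ind (insert v S)) 0 (fun u => by rw [← hgind u]; ring)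
  -- value of g on relevant sets
  have hgv : g v = 1 := by rw [hgind]; simp [ind]
  have hgR : ∀ u ∈ R, g u = 0 := by
    intro u hu
    rw [hmemR] at hu
    rw [hgind]
    have : u ∉ insert v S := by
      simp only [Finset.mem_insert, hmemS u]
      push_neg
      exact ⟨hu.1, by omega⟩
    simp [ind, this]
  have hgS : ∀ u ∈ S, g u = 1 := by
    intro u hu
    rw [hgind]
    simp [ind, Finset.mem_insert_of_mem hu]
  have hfR : ∀ u ∈ R, f u = 0 := fun u hu => ((hmemR u).mp hu).2
  have hfS : ∀ u ∈ S, f u = -1 := fun u hu => (hmemS u).mp hu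
  -- e(R,S) = 1
  have heRS : eSet e R S = 1 := by
    have h1 : Bq e f g = Bq e (ind A) g := by
      rw [Bq_symm e f g, Bq_symm e (ind A) g]
      refine Bq_congr_diff e g f (ind A) (fun u w => ?_)
      have d1 : ind A u - f u = 1 := by
        rcases hfrange u with h | h
        · have : u ∈ A := by simp [hAdef, h]
          simp [ind, this, h]
        · have : u ∉ A := by simp [hAdef, h]
          simp [ind, this, h]
      have d2 : ind A w - f w = 1 := by
        rcases hfrange w with h | h
        · have : w ∈ A := by simp [hAdef, h]
          simp [ind, this, h]
        · have : w ∉ A := by simp [hAdef, h]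
          simp [ind, this, h]
      omega
    have h2 : Bq e (ind A) g = ∑ u ∈ A, ∑ w ∈ Aᶜ, ((g u - g w : ℤ) : ℚ) * (e u w : ℚ) :=
      Bq_ind_split e hsymm A g
    have h3 : ∑ u ∈ A, ∑ w ∈ Aᶜ, ((g u - g w : ℤ) : ℚ) * (e u w : ℚ)
        = -(eSet e R S : ℚ) := by
      rw [← hins, Finset.sum_insert hvR, hins]
      have z1 : ∑ w ∈ Aᶜ, ((g v - g w : ℤ) : ℚ) * (e v w : ℚ) = 0 := by
        refine Finset.sum_eq_zero fun w hw => by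
          rw [hgv, hgS w hw]; norm_num
      have z2 : ∑ u ∈ R, ∑ w ∈ Aᶜ, ((g u - g w : ℤ) : ℚ) * (e u w : ℚ)
          = -(eSet e R S : ℚ) := by
        rw [eSet_cast, ← Finset.sum_neg_distrib]
        refine Finset.sum_congr rfl fun u hu => ?_
        rw [← Finset.sum_neg_distrib]
        refine Finset.sum_congr rfl fun w hw => ?_
        rw [hgR u hu, hgS w hw]
        push_cast
        ring
      rw [z1, z2, zero_add]
    have : -(eSet e R S : ℚ) = -1 := by rw [← h3, ← h2, ← h1, hBfg]
    have h4 : (eSet e R S : ℚ) = 1 := by linarith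
    exact_mod_cast h4
  -- values of BL e x (cls {w}) and BL e y (cls {w})
  have hBLx : ∀ w : V, BL e x (cls {w}) = ∑ u : V, ((f w - f u : ℤ) : ℚ) * (e w u : ℚ) := by
    intro w
    rw [← hx]
    show Bq e f (ind {w}) = _
    rw [Bq_symm, Bq_single e hsymm]
  have hBLy : ∀ w : V, BL e y (cls {w}) = ∑ u : V, ((g w - g u : ℤ) : ℚ) * (e w u : ℚ) := by
    intro w
    rw [← hy]
    show Bq e g (ind {w}) = _
    rw [Bq_symm, Bq_single e hsymm]
  have hxR : ∀ w ∈ R, BL e x (cls {w}) = ((∑ u ∈ S, e w u : ℕ) : ℚ) := by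
    intro w hw
    rw [hBLx w, ← Finset.sum_add_sum_compl A, ← hSdef]
    have z1 : ∑ u ∈ A, ((f w - f u : ℤ) : ℚ) * (e w u : ℚ) = 0 := by
      refine Finset.sum_eq_zero fun u hu => ?_
      have : f u = 0 := by simpa [hAdef] using hu
      rw [hfR w hw, this]; norm_num
    have z2 : ∑ u ∈ S, ((f w - f u : ℤ) : ℚ) * (e w u : ℚ) = ((∑ u ∈ S, e w u : ℕ) : ℚ) := by
      push_cast
      refine Finset.sum_congr rfl fun u hu => ?_
      rw [hfR w hw, hfS u hu]
      push_cast
      ring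
    rw [z1, z2, zero_add]
  have hxS : ∀ w ∈ S, BL e x (cls {w}) ≤ 0 := by
    intro w hw
    rw [hBLx w]
    refine Finset.sum_nonpos fun u _ => ?_
    have h1 : f w = -1 := hfS w hw
    have h2 : f w - f u ≤ 0 := by rcases hfrange u with h | h <;> omega
    have : ((f w - f u : ℤ) : ℚ) ≤ 0 := by exact_mod_cast h2
    exact mul_nonpos_of_nonpos_of_nonneg this (by positivity)
  have hyS' : ∀ w ∈ S, BL e y (cls {w}) = ((∑ u ∈ R, e w u : ℕ) : ℚ) := by
    intro w hw
    rw [hBLy w]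
    have hsplit : (Finset.univ : Finset V) = (insert v S) ∪ R := by
      ext u
      simp only [Finset.mem_univ, true_iff, Finset.mem_union, Finset.mem_insert, hmemS u, hmemR u]
      by_cases hu : u = v
      · left; left; exact hu
      · rcases hfrange u with h | h
        · right; exact ⟨hu, h⟩
        · left; right; exact h
    have hdisj : Disjoint (insert v S) R := by
      rw [Finset.disjoint_left]
      intro u hu hu'
      rw [hmemR] at hu'
      rcases Finset.mem_insert.mp hu with h | h
      · exact hu'.1 h
      · rw [hmemS] at h; omega
    rw [hsplit, Finset.sum_union hdisj]
    have z1 : ∑ u ∈ insert v S, ((g w - g u : ℤ) : ℚ) * (e w u : ℚ) = 0 := by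
      refine Finset.sum_eq_zero fun u hu => ?_
      have hgu : g u = 1 := by
        rcases Finset.mem_insert.mp hu with h | h
        · rw [h]; exact hgv
        · exact hgS u h
      rw [hgS w hw, hgu]; norm_num
    have z2 : ∑ u ∈ R, ((g w - g u : ℤ) : ℚ) * (e w u : ℚ) = ((∑ u ∈ R, e w u : ℕ) : ℚ) := by
      push_cast
      refine Finset.sum_congr rfl fun u hu => ?_
      rw [hgS w hw, hgR u hu]
      push_cast
      ring
    rw [z1, z2, zero_add]
  have hyR : ∀ w ∈ R, BL e y (cls {w}) ≤ 0 := by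
    intro w hw
    rw [hBLy w]
    refine Finset.sum_nonpos fun u _ => ?_
    have h1 : g w = 0 := hgR w hw
    have h2 : g w - g u ≤ 0 := by
      have : g u = 0 ∨ g u = 1 := by
        rcases hfrange u with h | h
        · by_cases hu : u = v
          · right; rw [hu]; exact hgv
          · left; exact hgR u ((hmemR u).mpr ⟨hu, h⟩)
        · right; exact hgS u ((hmemS u).mpr h)
      omega
    have : ((g w - g u : ℤ) : ℚ) ≤ 0 := by exact_mod_cast h2
    exact mul_nonpos_of_nonpos_of_nonneg this (by positivity)
  -- find u₁ and u₂
  have hsum1 : ∑ w ∈ R, ∑ u ∈ S, e w u = 1 := heRS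
  have hsum2 : ∑ w ∈ S, ∑ u ∈ R, e w u = 1 := by
    rw [← hsum1, Finset.sum_comm]
    exact Finset.sum_congr rfl fun u _ => Finset.sum_congr rfl fun w _ => hsymm w u
  obtain ⟨u₁, hu₁R, hW1, hWz1⟩ := nat_sum_eq_one hsum1
  obtain ⟨u₂, hu₂S, hW2, hWz2⟩ := nat_sum_eq_one hsum2
  have hmem : ∀ u : V, u ≠ v → u ∈ R ∨ u ∈ S := by
    intro u hu
    rcases hfrange u with h | h
    · left; exact (hmemR u).mpr ⟨hu, h⟩
    · right; exact (hmemS u).mpr h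
  refine ⟨R, S, ?_, hvR, hvS, ?_, Or.inl ⟨hxA, hyS⟩, heRS, u₁, u₂,
    ((hmemR u₁).mp hu₁R).1, fun h => hvS (h ▸ hu₂S), ?_, ?_, ?_, ?_, ?_⟩
  · -- Disjoint R S
    rw [Finset.disjoint_left]
    intro u hu hu'
    rw [hmemR] at hu
    rw [hmemS] at hu'
    omega
  · -- R ∪ S = {v}ᶜ
    ext u
    simp only [Finset.mem_union, Finset.mem_compl, Finset.mem_singleton, hmemR u, hmemS u]
    constructor
    · rintro (⟨h1, _⟩ | h1)
      · exact h1
      · intro h; rw [h, hfv] at h1; omega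
    · intro h
      rcases hfrange u with h1 | h1
      · left; exact ⟨h, h1⟩
      · right; exact h1
  · rw [hxR u₁ hu₁R, hW1]; norm_num
  · rw [hyS' u₂ hu₂S, hW2]; norm_num
  · -- uniqueness for x
    intro u hu h1
    rcases hmem u hu with h | h
    · by_contra hne
      rw [hxR u h, hWz1 u h hne] at h1
      norm_num at h1
    · have := hxS u h
      rw [h1] at this
      norm_num at this
  · -- uniqueness for y
    intro u hu h1
    rcases hmem u hu with h | h
    · have := hyR u h
      rw [h1] at this
      norm_num at this
    · by_contra hne
      rw [hyS' u h, hWz2 u h hne] at h1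
      norm_num at h1
  · -- the remaining bound
    intro w hwv hw1 hw2
    rcases hmem w hwv with h | h
    · refine ⟨?_, hyR w h⟩
      rw [hxR w h, hWz1 w h hw1]
      norm_num
    · refine ⟨hxS w h, ?_⟩
      rw [hyS' w h, hWz2 w h hw2]
      norm_num
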